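/- Let G be a finite group, p a prime, P a Sylow p-subgroup of G, and n ≥ 1. Let D = G^n be the direct product of n copies of G and let Q = P^n ≤ D (which is a Sylow p-subgroup of D). Then Γ_D(Q) equals the Cartesian product of n copies of Γ_G(P); that is, a tuple (x_1, …, x_n) ∈ D lies in Γ_D(Q) if and only if x_i ∈ Γ_G(P) for every i. In particular, |Γ_D(Q)|/|D| = (|Γ_G(P)|/|G|)^n. -/
import Mathlib

/-- The conjugate subgroup `H^x = x⁻¹ H x`. -/
def conjSub {G : Type*} [Group G] (H : Subgroup G) (x : G) : Subgroup G :=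
  H.map (MulAut.conj x⁻¹).toMonoidHom

/-- `Γ_G(P)`: the set of `x ∈ G` such that `P ∩ P^x` is inclusion-minimal in the family
`{P ∩ P^g : g ∈ G}`. -/
def Gamma {G : Type*} [Group G] (P : Subgroup G) : Set G :=
  {x : G | ∀ g : G, P ⊓ conjSub P g ≤ P ⊓ conjSub P x → P ⊓ conjSub P g = P ⊓ conjSub P x}

lemma mem_conjSub {G : Type*} [Group G] {H : Subgroup G} {x y : G} :
    y ∈ conjSub H x ↔ x * y * x⁻¹ ∈ H := by
  simp only [conjSub, Subgroup.mem_map, MulEquiv.coe_toMonoidHom, MulAut.conj_apply, inv_inv]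
  constructor
  · rintro ⟨h, hh, rfl⟩
    simpa [mul_assoc] using hh
  · intro h
    exact ⟨x * y * x⁻¹, h, by group⟩

lemma pi_inf_conj {n : ℕ} {G : Type*} [Group G] (P : Subgroup G) (g : Fin n → G) :
    (Subgroup.pi Set.univ fun _ => P) ⊓
        conjSub (Subgroup.pi Set.univ fun _ => P) g =
      Subgroup.pi Set.univ fun i => P ⊓ conjSub P (g i) := by
  ext y
  simp only [Subgroup.mem_inf, Subgroup.mem_pi, Set.mem_univ, forall_true_left, mem_conjSub,
    Pi.mul_apply, Pi.inv_apply]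
  exact ⟨fun h i => ⟨h.1 i, h.2 i⟩, fun h => ⟨fun i => (h i).1, fun i => (h i).2⟩⟩

lemma pi_le_pi_iff {n : ℕ} {G : Type*} [Group G] {S T : Fin n → Subgroup G} :
    (Subgroup.pi Set.univ S ≤ Subgroup.pi Set.univ T) ↔ ∀ i, S i ≤ T i := by
  constructor
  · intro h i a ha
    have := h ((Subgroup.mulSingle_mem_pi i a).2 fun _ => ha)
    simpa using this i (Set.mem_univ i)
  · intro h y hy i _
    exact h i (hy i (Set.mem_univ i))

lemma pi_eq_pi_iff {n : ℕ} {G : Type*} [Group G] {S T : Fin n → Subgroup G} :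
    (Subgroup.pi Set.univ S = Subgroup.pi Set.univ T) ↔ ∀ i, S i = T i := by
  constructor
  · intro h i
    exact le_antisymm (pi_le_pi_iff.1 h.le i) (pi_le_pi_iff.1 h.ge i)
  · intro h
    ext y
    simp [Subgroup.mem_pi, h]

/-- **Remark.** For `D = G^n` and `Q = P^n` (a Sylow `p`-subgroup of `D`), a tuple lies in
`Γ_D(Q)` iff each of its coordinates lies in `Γ_G(P)`; in particular
`|Γ_D(Q)|/|D| = (|Γ_G(P)|/|G|)^n`. -/
theorem gamma_pi_product
    (G : Type*) [Group G] [Finite G] (p : ℕ) (hp : p.Prime) (P : Sylow p G)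
    (n : ℕ) (hn : 1 ≤ n)
    (Q : Subgroup (Fin n → G)) (hQ : Q = Subgroup.pi Set.univ fun _ => (P : Subgroup G)) :
    (∀ x : Fin n → G, x ∈ Gamma Q ↔ ∀ i, x i ∈ Gamma (P : Subgroup G)) ∧
      (Nat.card (Gamma Q) : ℝ) / Nat.card (Fin n → G) =
        ((Nat.card (Gamma (P : Subgroup G)) : ℝ) / Nat.card G) ^ n := by
  subst hQ
  have key : ∀ x : Fin n → G,
      x ∈ Gamma (Subgroup.pi Set.univ fun _ => (P : Subgroup G)) ↔
        ∀ i, x i ∈ Gamma (P : Subgroup G) := by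
    intro x
    constructor
    · intro hx i g hg
      classical
      set g' : Fin n → G := Function.update x i g with hg'
      have hle : ∀ j, (P : Subgroup G) ⊓ conjSub (P : Subgroup G) (g' j) ≤
          (P : Subgroup G) ⊓ conjSub (P : Subgroup G) (x j) := by
        intro j
        by_cases hj : j = i
        · subst hj; simpa [g'] using hg
        · simp [g', Function.update_of_ne hj]
      have := hx g' (by
        rw [pi_inf_conj, pi_inf_conj]
        exact pi_le_pi_iff.2 hle)
      rw [pi_inf_conj, pi_inf_conj, pi_eq_pi_iff] at this
      have := this i
      simpa [g'] using this
    · intro hx g hg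
      rw [pi_inf_conj, pi_inf_conj] at hg ⊢
      rw [pi_eq_pi_iff]
      exact fun i => hx i (g i) (pi_le_pi_iff.1 hg i)
  refine ⟨key, ?_⟩
  have hset : Gamma (Subgroup.pi Set.univ fun _ => (P : Subgroup G)) =
      Set.pi Set.univ (fun _ : Fin n => Gamma (P : Subgroup G)) := by
    ext x
    simp [key x, Set.mem_pi]
  have hcard : Nat.card (Gamma (Subgroup.pi Set.univ fun _ : Fin n => (P : Subgroup G))) =
      Nat.card (Gamma (P : Subgroup G)) ^ n := by
    rw [hset, Nat.card_eq_of_bijective _ (Equiv.Set.univPi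
      (fun _ : Fin n => Gamma (P : Subgroup G))).bijective, Nat.card_pi]
    simp
  rw [hcard, Nat.card_pi]
  simp [div_pow]
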